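/- Let G be a finite group, Φ(G) its Frattini subgroup, and p, q primes. Then q divides |G/O_{p',p}(G)| if and only if q divides |(G/Φ(G))/O_{p',p}(G/Φ(G))|. (The Hawkes graph function is E_Φ-closed: Γ_H(G/Φ(G)) = Γ_H(G).) -/

import Mathlib

/-- The join of a set of normal subgroups is normal. -/
theorem sSup_normal {G : Type*} [Group G] (S : Set (Subgroup G)) (hS : ∀ N ∈ S, N.Normal) :
    (sSup S).Normal := by
  constructor
  intro n hn g
  rw [sSup_eq_iSup'] at hn ⊢
  refine Subgroup.iSup_induction (C := fun x => g * x * g⁻¹ ∈ ⨆ N : S, (N : Subgroup G))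
    _ hn ?_ ?_ ?_
  · intro N x hx
    exact Subgroup.mem_iSup_of_mem N ((hS N N.2).conj_mem x hx g)
  · simpa using Subgroup.one_mem _
  · intro x y hx hy
    have h : g * (x * y) * g⁻¹ = (g * x * g⁻¹) * (g * y * g⁻¹) := by group
    rw [h]; exact Subgroup.mul_mem _ hx hy

/-- The `p'`-core `O_{p'}(G)`: the largest normal subgroup of `G` of order coprime to `p`,
realized as the join of all normal subgroups of order coprime to `p`. -/
def pPrimeCore (p : ℕ) (G : Type*) [Group G] : Subgroup G :=
  sSup {N : Subgroup G | N.Normal ∧ Nat.Coprime (Nat.card N) p}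

instance pPrimeCore_normal (p : ℕ) (G : Type*) [Group G] : (pPrimeCore p G).Normal :=
  sSup_normal _ fun _ hN => hN.1

/-- The `p`-core `O_p(G)`: the largest normal `p`-subgroup of `G`,
realized as the join of all normal `p`-subgroups. -/
def pCore (p : ℕ) (G : Type*) [Group G] : Subgroup G :=
  sSup {N : Subgroup G | N.Normal ∧ IsPGroup p N}

instance pCore_normal (p : ℕ) (G : Type*) [Group G] : (pCore p G).Normal :=
  sSup_normal _ fun _ hN => hN.1

/-- `O_{p',p}(G)`: the preimage in `G` of `O_p(G / O_{p'}(G))`. -/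
def OpPrimeP (p : ℕ) (G : Type*) [Group G] : Subgroup G :=
  (pCore p (G ⧸ pPrimeCore p G)).comap (QuotientGroup.mk' (pPrimeCore p G))

/-- A Schmidt group: a non-nilpotent group all of whose proper subgroups are nilpotent. -/
def IsSchmidt (G : Type*) [Group G] : Prop :=
  ¬ Group.IsNilpotent G ∧ ∀ H : Subgroup G, H ≠ ⊤ → Group.IsNilpotent H

/-- A Schmidt `(p,q)`-group: a Schmidt group whose order is divisible by exactly the
primes `p` and `q` and whose Sylow `p`-subgroup is normal. -/
def IsSchmidtPQ (p q : ℕ) (G : Type*) [Group G] : Prop :=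
  IsSchmidt G ∧ (Nat.card G).primeFactors = {p, q} ∧ ∃ P : Sylow p G, (P : Subgroup G).Normal

section HawkesAux

open Subgroup MulOpposite MulAction Pointwise

universe u

variable {G : Type u} [Group G] [Finite G]

private theorem hk_normal_subgroupOf {N : Subgroup G} [hN : N.Normal] (K : Subgroup G) :
    (N.subgroupOf K).Normal := by
  constructor
  rintro ⟨x, hxK⟩ hx g
  simpa [Subgroup.mem_subgroupOf] using hN.conj_mem x (by simpa [Subgroup.mem_subgroupOf] using hx) g

private theorem hk_card_map_mk'_mul (A X : Subgroup G) [A.Normal] :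
    Nat.card (X.map (QuotientGroup.mk' A)) * Nat.card (A ⊓ X : Subgroup G) = Nat.card X := by
  set f := (QuotientGroup.mk' A).comp X.subtype with hf
  have hker : f.ker = (A ⊓ X).subgroupOf X := by
    ext ⟨x, hx⟩
    simp [hf, f, MonoidHom.mem_ker, Subgroup.mem_subgroupOf, QuotientGroup.mk'_apply,
      QuotientGroup.eq_one_iff, hx]
  have hrange : f.range = X.map (QuotientGroup.mk' A) := by
    ext y
    simp [hf, f, MonoidHom.mem_range, Subgroup.mem_map, Subtype.exists]
  have h1 : Nat.card X = Nat.card (X ⧸ f.ker) * Nat.card f.ker :=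
    Subgroup.card_eq_card_quotient_mul_card_subgroup f.ker
  have h2 : Nat.card (X ⧸ f.ker) = Nat.card (X.map (QuotientGroup.mk' A)) := by
    rw [← hrange]
    exact Nat.card_congr (QuotientGroup.quotientKerEquivRange f).toEquiv
  have h3 : Nat.card f.ker = Nat.card (A ⊓ X : Subgroup G) := by
    rw [hker]
    exact Nat.card_congr (Subgroup.subgroupOfEquivOfLe inf_le_right).toEquiv
  rw [h1, h2, h3]

private theorem hk_card_map_of_injective (K : Subgroup G) {H : Type u} [Group H] (f : G →* H)
    (hf : Function.Injective f) : Nat.card (K.map f) = Nat.card K :=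
  (Nat.card_congr (Subgroup.equivMapOfInjective K f hf).toEquiv).symm

private theorem hk_commutator_lt {N : Subgroup G} [N.Normal] (hs : Group.IsSolvable ↥N)
    (hbot : N ≠ ⊥) : ⁅N, N⁆ < N := by
  refine lt_of_le_of_ne (Subgroup.commutator_le_right N N) ?_
  intro heq
  have hmap : ∀ k : ℕ, (derivedSeries ↥N k).map N.subtype = N := by
    intro k
    induction k with
    | zero => simp [derivedSeries_zero, ← MonoidHom.range_eq_map, Subgroup.range_subtype]
    | succ k ih => rw [derivedSeries_succ, Subgroup.map_commutator, ih, heq]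
  obtain ⟨k, hk⟩ := hs.solvable
  have := hmap k
  rw [hk, Subgroup.map_bot] at this
  exact hbot this.symm

private def mkQ (N : Subgroup G) [N.Normal] [IsMulCommutative N]
    (α : N.LeftTransversal) : N.QuotientDiff := Quotient.mk'' α

private theorem smul_mkQ (N : Subgroup G) [N.Normal] [IsMulCommutative N]
    (g : G) (α : N.LeftTransversal) :
    g • mkQ N α = mkQ N (op g⁻¹ • α) := rfl

private theorem hk_conj_abelian {N K1 K2 : Subgroup G}
    [N.Normal] [IsMulCommutative N] (hco : Nat.Coprime (Nat.card N) N.index)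
    (h1 : Subgroup.IsComplement' N K1) (h2 : Subgroup.IsComplement' N K2) :
    ∃ g : G, K2 = K1.map (MulAut.conj g).toMonoidHom := by
  have key : ∀ (K : Subgroup G) (h : Subgroup.IsComplement' N K),
      K = stabilizer G (mkQ N ⟨(K : Set G), h.symm⟩) := by
    intro K h
    have hle : K ≤ stabilizer G (mkQ N ⟨(K : Set G), h.symm⟩) := by
      intro g hg
      have hset : (op g⁻¹ • (⟨(K : Set G), h.symm⟩ : N.LeftTransversal))
          = ⟨(K : Set G), h.symm⟩ := by
        apply Subtype.ext
        show op g⁻¹ • (K : Set G) = (K : Set G)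
        ext x
        constructor
        · rintro ⟨y, hy, rfl⟩
          simpa using K.mul_mem hy (K.inv_mem hg)
        · intro hx
          exact ⟨x * g, K.mul_mem hx hg, by simp⟩
      rw [MulAction.mem_stabilizer_iff, smul_mkQ, hset]
    have hcard : Nat.card (stabilizer G (mkQ N ⟨(K : Set G), h.symm⟩)) ≤ Nat.card K := by
      have c1 := (Subgroup.isComplement'_stabilizer_of_coprime
        (α := mkQ N ⟨(K : Set G), h.symm⟩) hco).card_mul
      have c2 := h.card_mul
      have hpos : 0 < Nat.card N := Nat.card_pos
      exact le_of_eq (Nat.eq_of_mul_eq_mul_left hpos (c1.trans c2.symm))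
    exact Subgroup.eq_of_le_of_card_ge hle hcard
  obtain ⟨n, hn⟩ := Subgroup.exists_smul_eq hco
    (mkQ N ⟨(K1 : Set G), h1.symm⟩) (mkQ N ⟨(K2 : Set G), h2.symm⟩)
  refine ⟨(n : G), ?_⟩
  rw [key K2 h2, key K1 h1, ← hn]
  have hns : (n • (mkQ N ⟨(K1 : Set G), h1.symm⟩))
      = ((n : G) • (mkQ N ⟨(K1 : Set G), h1.symm⟩)) := rfl
  rw [hns]
  exact MulAction.stabilizer_smul_eq_stabilizer_map_conj _ _

private theorem hk_conj_aux (n : ℕ) : ∀ {G : Type u} [Group G] [Finite G]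
    {N K1 K2 : Subgroup G} [N.Normal], Group.IsSolvable ↥N → Nat.Coprime (Nat.card N) N.index →
    Subgroup.IsComplement' N K1 → Subgroup.IsComplement' N K2 → Nat.card N ≤ n →
    ∃ g : G, K2 = K1.map (MulAut.conj g).toMonoidHom := by
  induction n with
  | zero =>
    intro G _ _ N K1 K2 _ _ _ _ _ hn
    have : 0 < Nat.card N := Nat.card_pos
    omega
  | succ n IH =>
    intro G _ _ N K1 K2 _ hs hco h1 h2 hn
    by_cases hle : Nat.card N ≤ n
    · exact IH hs hco h1 h2 hle
    by_cases hbot : N = ⊥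
    · subst hbot
      refine ⟨1, ?_⟩
      have e1 : K1 = ⊤ := Subgroup.isComplement'_bot_left.mp h1
      have e2 : K2 = ⊤ := Subgroup.isComplement'_bot_left.mp h2
      have : (MulAut.conj (1 : G)).toMonoidHom = MonoidHom.id G := by ext x; simp
      rw [e1, e2, this, Subgroup.map_id]
    set M : Subgroup G := ⁅N, N⁆ with hMdef
    have hMle : M ≤ N := Subgroup.commutator_le_right N N
    by_cases habel : M = ⊥
    · haveI : IsMulCommutative N := by
        constructor; constructor
        intro a b
        have h := Subgroup.commutator_le.mp (le_of_eq habel) (a : G) a.2 (b : G) b.2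
        rw [Subgroup.mem_bot, commutatorElement_eq_one_iff_mul_comm] at h
        exact Subtype.ext h
      exact hk_conj_abelian hco h1 h2
    -- non-abelian case
    have hMlt : M < N := hk_commutator_lt hs hbot
    set π := QuotientGroup.mk' M with hπdef
    have hπs : Function.Surjective π := QuotientGroup.mk'_surjective M
    have hkerπ : π.ker = M := QuotientGroup.ker_mk' M
    haveI : (N.map π).Normal := Subgroup.Normal.map ‹N.Normal› π hπs
    have hMN : M ⊓ N = M := inf_eq_left.mpr hMle
    have e1 : Nat.card (N.map π) * Nat.card M = Nat.card N := by
      have := hk_card_map_mk'_mul M N; rwa [hMN] at this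
    have hM2 : 2 ≤ Nat.card M := (Subgroup.one_lt_card_iff_ne_bot M).mpr habel
    have hNmappos : 0 < Nat.card (N.map π) := Nat.card_pos
    have hMpos : 0 < Nat.card M := Nat.card_pos
    have hNbarlt : Nat.card (N.map π) < Nat.card N := by nlinarith
    have hinfbot : ∀ K : Subgroup G, Subgroup.IsComplement' N K → M ⊓ K = ⊥ := by
      intro K hK
      rw [eq_bot_iff]
      exact le_trans (inf_le_inf_right K hMle) (le_of_eq (disjoint_iff.mp hK.disjoint))
    have hcardmap : ∀ K : Subgroup G, M ⊓ K = ⊥ → Nat.card (K.map π) = Nat.card K := by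
      intro K hK
      have := hk_card_map_mk'_mul M K
      rwa [hK, Subgroup.card_bot, mul_one] at this
    have hGbar : Nat.card (G ⧸ M) * Nat.card M = Nat.card G :=
      (Subgroup.card_eq_card_quotient_mul_card_subgroup M).symm
    have hcpl : ∀ K : Subgroup G, Subgroup.IsComplement' N K →
        Subgroup.IsComplement' (N.map π) (K.map π) := by
      intro K hK
      apply Subgroup.isComplement'_of_card_mul_and_disjoint
      · have key : Nat.card (N.map π) * Nat.card (K.map π) * Nat.card M
            = Nat.card (G ⧸ M) * Nat.card M := by
          rw [hcardmap K (hinfbot K hK), hGbar]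
          calc Nat.card (N.map π) * Nat.card K * Nat.card M
              = (Nat.card (N.map π) * Nat.card M) * Nat.card K := by ring
            _ = Nat.card N * Nat.card K := by rw [e1]
            _ = Nat.card G := hK.card_mul
        exact Nat.eq_of_mul_eq_mul_right hMpos key
      · rw [disjoint_iff, eq_bot_iff]
        rintro x ⟨hxN, hxK⟩
        obtain ⟨k, hk, rfl⟩ := hxK
        have hkN : k ∈ N := by
          have : k ∈ (N.map π).comap π := hxN
          rwa [Subgroup.comap_map_eq, hkerπ, sup_eq_left.mpr hMle] at this
        have : k ∈ N ⊓ K := ⟨hkN, hk⟩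
        rw [disjoint_iff.mp hK.disjoint] at this
        rw [Subgroup.mem_bot] at this
        simp [this]
    haveI : Group.IsSolvable ↥N := hs
    have hsbar : Group.IsSolvable ↥(N.map π) := solvable_of_surjective (π.subgroupMap_surjective N)
    have hindexbar : (N.map π).index = N.index := by
      have hpos : 0 < Nat.card (N.map π) * Nat.card M := Nat.mul_pos hNmappos hMpos
      refine Nat.eq_of_mul_eq_mul_left hpos ?_
      calc Nat.card (N.map π) * Nat.card M * (N.map π).index
          = (Nat.card (N.map π) * (N.map π).index) * Nat.card M := by ring
        _ = Nat.card (G ⧸ M) * Nat.card M := by rw [Subgroup.card_mul_index]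
        _ = Nat.card G := hGbar
        _ = Nat.card N * N.index := (Subgroup.card_mul_index N).symm
        _ = Nat.card (N.map π) * Nat.card M * N.index := by rw [e1]
    have hcobar : Nat.Coprime (Nat.card (N.map π)) (N.map π).index := by
      rw [hindexbar]
      exact Nat.Coprime.coprime_dvd_left ⟨Nat.card M, e1.symm⟩ hco
    have hlebar : Nat.card (N.map π) ≤ n := by omega
    obtain ⟨gb, hgb⟩ := IH hsbar hcobar (hcpl K1 h1) (hcpl K2 h2) hlebar
    obtain ⟨g, rfl⟩ := hπs gb
    set cg := (MulAut.conj g).toMonoidHom with hcgdef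
    set K1' := K1.map cg with hK1'def
    have hK1'cpl : Subgroup.IsComplement' N K1' := by
      apply Subgroup.isComplement'_of_card_mul_and_disjoint
      · rw [hk_card_map_of_injective K1 cg (MulAut.conj g).injective]
        exact h1.card_mul
      · rw [disjoint_iff, eq_bot_iff]
        rintro x ⟨hxN, hxK⟩
        obtain ⟨k, hk, rfl⟩ := hxK
        have hconj : g⁻¹ * (g * k * g⁻¹) * g⁻¹⁻¹ ∈ N := ‹N.Normal›.conj_mem _ hxN g⁻¹
        have heqk : g⁻¹ * (g * k * g⁻¹) * g⁻¹⁻¹ = k := by group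
        rw [heqk] at hconj
        have : k ∈ N ⊓ K1 := ⟨hconj, hk⟩
        rw [disjoint_iff.mp h1.disjoint, Subgroup.mem_bot] at this
        simp [this, cg]
    have hcomm : K1'.map π = (K1.map π).map (MulAut.conj (π g)).toMonoidHom := by
      have hfun : π.comp cg = ((MulAut.conj (π g)).toMonoidHom).comp π := by
        ext x; simp [cg, MulAut.conj]
      rw [Subgroup.map_map, Subgroup.map_map, hfun]
    have himages : K1'.map π = K2.map π := by rw [hcomm, ← hgb]
    have hsupEq : K1' ⊔ M = K2 ⊔ M := by
      have a1 := Subgroup.comap_map_eq (f := π) K1'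
      have a2 := Subgroup.comap_map_eq (f := π) K2
      rw [hkerπ] at a1 a2
      rw [← a1, ← a2, himages]
    set L := K2 ⊔ M with hLdef
    have hK2L : K2 ≤ L := le_sup_left
    have hK1'L : K1' ≤ L := by rw [← hsupEq]; exact le_sup_left
    have hML : M ≤ L := le_sup_right
    haveI : M.Normal := by rw [hMdef]; infer_instance
    haveI : (M.subgroupOf L).Normal := hk_normal_subgroupOf L
    have hMmapbot : M.map π = ⊥ := by
      rw [eq_bot_iff]
      rintro x ⟨m, hm, rfl⟩
      have : m ∈ π.ker := by rwa [hkerπ]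
      simpa [Subgroup.mem_bot] using this
    have hcardL : ∀ K : Subgroup G, K ⊔ M = L → M ⊓ K = ⊥ →
        Nat.card L = Nat.card K * Nat.card M := by
      intro K hKM hKbot
      have h := hk_card_map_mk'_mul M L
      rw [inf_eq_left.mpr hML] at h
      have hLmap : L.map π = K.map π := by
        rw [← hKM, Subgroup.map_sup, hMmapbot, sup_bot_eq]
      rw [hLmap, hcardmap K hKbot] at h
      exact h.symm
    have hcplL : ∀ K : Subgroup G, K ≤ L → K ⊔ M = L → M ⊓ K = ⊥ →
        Subgroup.IsComplement' (M.subgroupOf L) (K.subgroupOf L) := by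
      intro K hKL hKM hKbot
      apply Subgroup.isComplement'_of_card_mul_and_disjoint
      · rw [Nat.card_congr (Subgroup.subgroupOfEquivOfLe hML).toEquiv,
          Nat.card_congr (Subgroup.subgroupOfEquivOfLe hKL).toEquiv]
        rw [hcardL K hKM hKbot]
        ring
      · rw [disjoint_iff]
        have : M.subgroupOf L ⊓ K.subgroupOf L = (M ⊓ K).subgroupOf L := by
          rw [Subgroup.subgroupOf, Subgroup.subgroupOf, Subgroup.subgroupOf, Subgroup.comap_inf]
        rw [this, hKbot, Subgroup.bot_subgroupOf]
    have hMK2bot : M ⊓ K2 = ⊥ := hinfbot K2 h2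
    have hMK1'bot : M ⊓ K1' = ⊥ := hinfbot K1' hK1'cpl
    have hcpl2 := hcplL K2 hK2L rfl hMK2bot
    have hcpl1 := hcplL K1' hK1'L hsupEq hMK1'bot
    have hMsolv : Group.IsSolvable ↥M := solvable_of_solvable_injective
      (Subgroup.inclusion_injective hMle)
    have hMLsolv : Group.IsSolvable ↥(M.subgroupOf L) := by
      haveI := hMsolv
      exact solvable_of_surjective (f := (Subgroup.subgroupOfEquivOfLe hML).symm.toMonoidHom)
        (Subgroup.subgroupOfEquivOfLe hML).symm.surjective
    have hcardML : Nat.card (M.subgroupOf L) = Nat.card M :=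
      Nat.card_congr (Subgroup.subgroupOfEquivOfLe hML).toEquiv
    have hcoML : Nat.Coprime (Nat.card (M.subgroupOf L)) (M.subgroupOf L).index := by
      have hidx : (M.subgroupOf L).index = Nat.card (K2.subgroupOf L) :=
        hcpl2.symm.index_eq_card
      have hcardK2 : Nat.card (K2.subgroupOf L) = Nat.card K2 :=
        Nat.card_congr (Subgroup.subgroupOfEquivOfLe hK2L).toEquiv
      have hK2idx : Nat.card K2 = N.index := by
        have c1 := h2.card_mul
        have c2 := Subgroup.card_mul_index N
        have hpos : 0 < Nat.card N := Nat.card_pos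
        exact Nat.eq_of_mul_eq_mul_left hpos (c1.trans c2.symm)
      rw [hidx, hcardML, hcardK2, hK2idx]
      exact Nat.Coprime.coprime_dvd_left (Subgroup.card_dvd_of_le hMle) hco
    have hMlen : Nat.card (M.subgroupOf L) ≤ n := by
      have hdvd : Nat.card M ≤ Nat.card N := Nat.le_of_dvd Nat.card_pos
        (Subgroup.card_dvd_of_le hMle)
      have hne : Nat.card M ≠ Nat.card N := by
        intro hcontra
        exact hMlt.ne (Subgroup.eq_of_le_of_card_ge hMle (le_of_eq hcontra.symm))
      rw [hcardML]
      omega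
    obtain ⟨l, hl⟩ := IH hMLsolv hcoML hcpl1 hcpl2 hMlen
    refine ⟨(l : G) * g, ?_⟩
    have happ : ∀ X : Subgroup ↥L, (X.map (MulAut.conj l).toMonoidHom).map L.subtype
        = (X.map L.subtype).map (MulAut.conj (l : G)).toMonoidHom := by
      intro X
      have hfun : L.subtype.comp (MulAut.conj l).toMonoidHom
          = ((MulAut.conj (l : G)).toMonoidHom).comp L.subtype := by
        ext x; simp [MulAut.conj]
      rw [Subgroup.map_map, Subgroup.map_map, hfun]
    have step : K2 = K1'.map (MulAut.conj (l : G)).toMonoidHom := by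
      have := congrArg (Subgroup.map L.subtype) hl
      rw [Subgroup.subgroupOf_map_subtype, inf_eq_left.mpr hK2L, happ,
        Subgroup.subgroupOf_map_subtype, inf_eq_left.mpr hK1'L] at this
      exact this
    rw [step, hK1'def, Subgroup.map_map]
    have hfun : ((MulAut.conj (l : G)).toMonoidHom).comp cg
        = (MulAut.conj ((l : G) * g)).toMonoidHom := by
      ext x; simp [cg, MulAut.conj, mul_assoc]
    rw [hfun]

private theorem hk_sSup_induction (S : Set (Subgroup G))
    (P : Subgroup G → Prop) (hP : ∀ N ∈ S, P N) (hbot : P ⊥)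
    (hsup : ∀ A B, P A → P B → P (A ⊔ B)) : P (sSup S) := by
  have hfin : S.Finite := Set.toFinite S
  rw [← hfin.coe_toFinset, ← Finset.sup_id_eq_sSup]
  exact Finset.sup_induction hbot (fun a ha b hb => hsup a b ha hb)
    (fun i hi => hP i (hfin.mem_toFinset.mp hi))

private theorem hk_card_sup_dvd (A B : Subgroup G) [A.Normal] :
    Nat.card (B ⊔ A : Subgroup G) ∣ Nat.card B * Nat.card A := by
  have h1 := Subgroup.card_eq_card_quotient_mul_card_subgroup (A.subgroupOf (B ⊔ A))
  have e := QuotientGroup.quotientInfEquivProdNormalQuotient B A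
  have h2 : Nat.card ((B ⊔ A : Subgroup G) ⧸ A.subgroupOf (B ⊔ A))
      = Nat.card (B ⧸ A.subgroupOf B) := (Nat.card_congr e.toEquiv).symm
  have h3 : Nat.card (B ⧸ A.subgroupOf B) ∣ Nat.card B := by
    rw [← Subgroup.index_eq_card]
    exact Subgroup.index_dvd_card _
  have h4 : Nat.card (A.subgroupOf (B ⊔ A)) = Nat.card A :=
    Nat.card_congr (Subgroup.subgroupOfEquivOfLe le_sup_right).toEquiv
  rw [h1, h2, h4]
  exact Nat.mul_dvd_mul_right h3 _

private theorem hk_pCore (p : ℕ) : (pCore p G).Normal ∧ IsPGroup p (pCore p G) := by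
  refine hk_sSup_induction _ (fun N => N.Normal ∧ IsPGroup p N) (fun N h => h)
    ⟨inferInstance, IsPGroup.of_bot⟩ ?_
  intro A B hA hB
  haveI := hA.1; haveI := hB.1
  exact ⟨inferInstance, IsPGroup.to_sup_of_normal_right hA.2 hB.2⟩

private theorem hk_pPrimeCore (p : ℕ) :
    (pPrimeCore p G).Normal ∧ Nat.Coprime (Nat.card (pPrimeCore p G)) p := by
  refine hk_sSup_induction _ (fun N => N.Normal ∧ Nat.Coprime (Nat.card N) p) (fun N h => h)
    ⟨inferInstance, by simp [Subgroup.card_bot, Nat.coprime_one_left]⟩ ?_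
  intro A B hA hB
  haveI := hA.1; haveI := hB.1
  refine ⟨inferInstance, ?_⟩
  exact Nat.Coprime.coprime_dvd_left (hk_card_sup_dvd B A) (Nat.Coprime.mul hA.2 hB.2)

private theorem hk_card_map_dvd {H : Type u} [Group H] (f : G →* H) (X : Subgroup G) :
    Nat.card (X.map f) ∣ Nat.card X :=
  Subgroup.card_dvd_of_surjective (f.subgroupMap X) (f.subgroupMap_surjective X)

private theorem hk_map_pPrimeCore_le {H : Type u} [Group H] [Finite H] (f : G →* H)
    (hf : Function.Surjective f) (p : ℕ) : (pPrimeCore p G).map f ≤ pPrimeCore p H :=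
  le_sSup ⟨Subgroup.Normal.map (hk_pPrimeCore p).1 f hf,
    Nat.Coprime.coprime_dvd_left (hk_card_map_dvd f _) (hk_pPrimeCore p).2⟩

private theorem hk_map_OpPrimeP_le {H : Type u} [Group H] [Finite H] (f : G →* H)
    (hf : Function.Surjective f) (p : ℕ) : (OpPrimeP p G).map f ≤ OpPrimeP p H := by
  set A := pPrimeCore p G with hA
  set A2 := pPrimeCore p H with hA2
  have hAle : A.map f ≤ A2 := hk_map_pPrimeCore_le f hf p
  have hle : A ≤ A2.comap f := Subgroup.map_le_iff_le_comap.mp hAle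
  set fbar := QuotientGroup.map A A2 f hle with hfbar
  have hcomm : ∀ x : G, fbar (QuotientGroup.mk' A x) = QuotientGroup.mk' A2 (f x) :=
    fun x => rfl
  have hfbars : Function.Surjective fbar := by
    intro y
    obtain ⟨h, rfl⟩ := QuotientGroup.mk'_surjective A2 y
    obtain ⟨g, rfl⟩ := hf h
    exact ⟨QuotientGroup.mk' A g, hcomm g⟩
  have hXle : (pCore p (G ⧸ A)).map fbar ≤ pCore p (H ⧸ A2) :=
    le_sSup ⟨Subgroup.Normal.map (hk_pCore p).1 fbar hfbars, (hk_pCore p).2.map fbar⟩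
  rintro x ⟨g, hg, rfl⟩
  show QuotientGroup.mk' A2 (f g) ∈ pCore p (H ⧸ A2)
  rw [← hcomm g]
  exact hXle (Subgroup.mem_map_of_mem fbar hg)

private theorem hk_hard {p : ℕ} [Fact p.Prime] :
    (OpPrimeP p (G ⧸ frattini G)).comap (QuotientGroup.mk' (frattini G)) ≤ OpPrimeP p G := by
  set Φ := frattini G with hΦ
  haveI hΦnormal : Φ.Normal := by rw [hΦ]; infer_instance
  set π := QuotientGroup.mk' Φ with hπdef
  have hπs : Function.Surjective π := QuotientGroup.mk'_surjective Φ
  have hkerπ : π.ker = Φ := QuotientGroup.ker_mk' Φ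
  set B := pPrimeCore p (G ⧸ Φ) with hBdef
  set C := OpPrimeP p (G ⧸ Φ) with hCdef
  set K := B.comap π with hKdef
  set T := C.comap π with hTdef
  haveI hKn : K.Normal := by rw [hKdef, hBdef]; infer_instance
  haveI hTn : T.Normal := by rw [hTdef, hCdef]; unfold OpPrimeP; infer_instance
  have hBC : B ≤ C := by
    intro x hx
    show QuotientGroup.mk' B x ∈ pCore p ((G ⧸ Φ) ⧸ B)
    have h1 : QuotientGroup.mk' B x = 1 := (QuotientGroup.eq_one_iff x).mpr hx
    rw [h1]; exact Subgroup.one_mem _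
  have hKT : K ≤ T := Subgroup.comap_mono hBC
  have hΦK : Φ ≤ K := by
    intro x hx
    show π x ∈ B
    have h1 : π x = 1 := by rwa [← MonoidHom.mem_ker, hkerπ]
    rw [h1]; exact Subgroup.one_mem _
  -- Sylow p-subgroup of the Frattini subgroup
  haveI : Group.IsNilpotent ↥Φ := by rw [hΦ]; exact frattini_nilpotent
  obtain ⟨P0⟩ := (inferInstance : Nonempty (Sylow p ↥Φ))
  have hP0n : (P0 : Subgroup ↥Φ).Normal :=
    Sylow.normal_of_normalizerCondition (normalizerCondition_of_isNilpotent) P0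
  haveI : (P0 : Subgroup ↥Φ).Characteristic := Sylow.characteristic_of_normal P0 hP0n
  set P₀ := (P0 : Subgroup ↥Φ).map Φ.subtype with hP₀def
  haveI hP₀n : P₀.Normal := by rw [hP₀def]; infer_instance
  have hP₀le : P₀ ≤ Φ := Subgroup.map_subtype_le _
  have hP₀p : IsPGroup p P₀ := P0.2.map Φ.subtype
  have hcardΦ : Nat.card ↥Φ = Nat.card P₀ * (P0 : Subgroup ↥Φ).index := by
    rw [← Subgroup.card_mul_index (P0 : Subgroup ↥Φ)]
    congr 1
    exact (hk_card_map_of_injective _ Φ.subtype Subtype.coe_injective).symm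
  have hpidx : ¬ p ∣ (P0 : Subgroup ↥Φ).index := Sylow.not_dvd_index P0
  have hKmap : K.map π = B := Subgroup.map_comap_eq_self_of_surjective hπs B
  have hcardK : Nat.card B * Nat.card ↥Φ = Nat.card K := by
    have h := hk_card_map_mk'_mul Φ K
    rwa [inf_eq_left.mpr hΦK, hKmap] at h
  set m := (P0 : Subgroup ↥Φ).index * Nat.card B with hmdef
  have hcardK' : Nat.card K = Nat.card P₀ * m := by
    rw [← hcardK, hcardΦ, hmdef]; ring
  have hBcop : Nat.Coprime (Nat.card B) p := by
    rw [hBdef]; exact (hk_pPrimeCore p).2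
  have hp : p.Prime := Fact.out
  have hmcop : Nat.Coprime m p := by
    rw [hmdef]
    exact Nat.Coprime.mul ((Nat.Prime.coprime_iff_not_dvd hp).mpr hpidx).symm hBcop
  -- Schur-Zassenhaus inside K
  set PK := P₀.subgroupOf K with hPKdef
  have hP₀K : P₀ ≤ K := le_trans hP₀le hΦK
  haveI : PK.Normal := by rw [hPKdef]; exact hk_normal_subgroupOf K
  have hcardPK : Nat.card PK = Nat.card P₀ :=
    Nat.card_congr (Subgroup.subgroupOfEquivOfLe hP₀K).toEquiv
  have hP₀pos : 0 < Nat.card P₀ := Nat.card_pos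
  have hidxPK : PK.index = m := by
    have h := Subgroup.card_mul_index PK
    rw [hcardPK] at h
    apply Nat.eq_of_mul_eq_mul_left hP₀pos
    rw [h, hcardK']
  have hPKp : IsPGroup p PK := hP₀p.comap_of_injective K.subtype Subtype.coe_injective
  have hcop : Nat.Coprime (Nat.card PK) PK.index := by
    obtain ⟨k, hk⟩ := IsPGroup.iff_card.mp hPKp
    rw [hk, hidxPK]
    exact Nat.Coprime.pow_left k hmcop.symm
  obtain ⟨H', hH'⟩ := Subgroup.exists_right_complement'_of_coprime hcop
  set Hh := H'.map K.subtype with hHhdef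
  have hcardH' : Nat.card H' = m := by
    have h := hH'.card_mul
    rw [hcardPK, hcardK'] at h
    exact Nat.eq_of_mul_eq_mul_left hP₀pos h
  have hcardH : Nat.card Hh = m := by
    rw [hHhdef, hk_card_map_of_injective _ K.subtype Subtype.coe_injective]
    exact hcardH'
  have hHhK : Hh ≤ K := Subgroup.map_subtype_le _
  have hKsup : P₀ ⊔ Hh = K := by
    have h1 := hH'.sup_eq_top
    have h2 := congrArg (Subgroup.map K.subtype) h1
    rw [Subgroup.map_sup, hPKdef, Subgroup.subgroupOf_map_subtype, inf_eq_left.mpr hP₀K,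
      ← MonoidHom.range_eq_map, Subgroup.range_subtype] at h2
    exact h2
  -- Frattini argument: the normalizer of Hh together with K is everything
  have hfrat : ∀ g : G, g ∈ K ⊔ (Subgroup.normalizer (Hh : Set G)) := by
    intro g
    set cg := (MulAut.conj g).toMonoidHom with hcgdef
    set H2 := Hh.map cg with hH2def
    have hH2K : H2 ≤ K := by
      rintro x ⟨h, hh, rfl⟩
      exact hKn.conj_mem h (hHhK hh) g
    have hcardH2 : Nat.card H2 = m := by
      rw [hH2def, hk_card_map_of_injective _ cg (MulAut.conj g).injective, hcardH]
    set H2K := H2.subgroupOf K with hH2Kdef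
    have hcardH2K : Nat.card H2K = m := by
      rw [hH2Kdef, Nat.card_congr (Subgroup.subgroupOfEquivOfLe hH2K).toEquiv, hcardH2]
    have hdisj : P₀ ⊓ H2 = ⊥ := by
      have h1 : Nat.card (P₀ ⊓ H2 : Subgroup G) ∣ Nat.card P₀ :=
        Subgroup.card_dvd_of_le inf_le_left
      have h2 : Nat.card (P₀ ⊓ H2 : Subgroup G) ∣ m := by
        rw [← hcardH2]; exact Subgroup.card_dvd_of_le inf_le_right
      obtain ⟨k, hk⟩ := IsPGroup.iff_card.mp hP₀p
      rw [hk] at h1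
      have hco2 : Nat.gcd (p ^ k) m = 1 := Nat.Coprime.pow_left k hmcop.symm
      have := Nat.dvd_gcd h1 h2
      rw [hco2] at this
      exact Subgroup.card_eq_one.mp (Nat.dvd_one.mp this)
    have hcplH2 : Subgroup.IsComplement' PK H2K := by
      apply Subgroup.isComplement'_of_card_mul_and_disjoint
      · rw [hcardPK, hcardH2K, ← hcardK']
      · rw [disjoint_iff]
        have h3 : PK ⊓ H2K = (P₀ ⊓ H2).subgroupOf K := by
          rw [hPKdef, hH2Kdef, Subgroup.subgroupOf, Subgroup.subgroupOf, Subgroup.subgroupOf,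
            Subgroup.comap_inf]
        rw [h3, hdisj, Subgroup.bot_subgroupOf]
    have hsolv : Group.IsSolvable ↥PK := by
      haveI : Group.IsNilpotent ↥PK := hPKp.isNilpotent
      infer_instance
    obtain ⟨kk, hkk⟩ := hk_conj_aux (Nat.card PK) hsolv hcop hH' hcplH2 le_rfl
    have hH2eq : H2 = Hh.map (MulAut.conj (kk : G)).toMonoidHom := by
      have h2 := congrArg (Subgroup.map K.subtype) hkk
      rw [hH2Kdef, Subgroup.subgroupOf_map_subtype, inf_eq_left.mpr hH2K] at h2
      have hfun : K.subtype.comp (MulAut.conj kk).toMonoidHom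
          = ((MulAut.conj (kk : G)).toMonoidHom).comp K.subtype := by
        ext x; simp [MulAut.conj]
      rw [Subgroup.map_map, hfun, ← Subgroup.map_map] at h2
      rw [h2, hHhdef]
    have hnorm : (kk : G)⁻¹ * g ∈ (Subgroup.normalizer (Hh : Set G)) := by
      rw [Subgroup.mem_normalizer_iff]
      intro x
      constructor
      · intro hx
        have h4 : cg x ∈ H2 := Subgroup.mem_map_of_mem cg hx
        rw [hH2eq] at h4
        obtain ⟨y, hy, h5⟩ := h4
        have h6 : ((kk : G)⁻¹ * g) * x * ((kk : G)⁻¹ * g)⁻¹ = y := by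
          have hconj : (kk : G) * y * (kk : G)⁻¹ = g * x * g⁻¹ := h5
          have hy2 : y = (kk : G)⁻¹ * (g * x * g⁻¹) * (kk : G) := by rw [← hconj]; group
          rw [hy2]; group
        rw [h6]; exact hy
      · intro hx
        have h4 : (MulAut.conj (kk : G)).toMonoidHom (((kk : G)⁻¹ * g) * x * ((kk : G)⁻¹ * g)⁻¹)
            ∈ Hh.map (MulAut.conj (kk : G)).toMonoidHom := Subgroup.mem_map_of_mem _ hx
        rw [← hH2eq] at h4
        have h5 : (MulAut.conj (kk : G)).toMonoidHom (((kk : G)⁻¹ * g) * x * ((kk : G)⁻¹ * g)⁻¹)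
            = cg x := by
          simp only [hcgdef, MulEquiv.coe_toMonoidHom, MulAut.conj_apply]
          group
        rw [h5] at h4
        obtain ⟨y, hy, h6⟩ := h4
        have h7 : y = x := by
          have : g * y * g⁻¹ = g * x * g⁻¹ := h6
          exact mul_left_cancel (mul_right_cancel this)
        rw [← h7]; exact hy
    have : g = (kk : G) * ((kk : G)⁻¹ * g) := by group
    rw [this]
    exact Subgroup.mul_mem_sup (SetLike.coe_mem kk) hnorm
  have htop2 : (Subgroup.normalizer (Hh : Set G)) ⊔ Φ = ⊤ := by
    rw [eq_top_iff]
    intro g _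
    have h1 := hfrat g
    rw [← hKsup] at h1
    have h2 : P₀ ⊔ Hh ⊔ (Subgroup.normalizer (Hh : Set G)) ≤ (Subgroup.normalizer (Hh : Set G)) ⊔ Φ := by
      apply sup_le (sup_le _ _) _
      · exact le_trans hP₀le le_sup_right
      · exact le_trans Subgroup.le_normalizer le_sup_left
      · exact le_sup_left
    exact h2 h1
  have hnormtop : (Subgroup.normalizer (Hh : Set G)) = ⊤ := by
    rw [hΦ] at htop2
    exact frattini_nongenerating htop2
  haveI hHhn : Hh.Normal := Subgroup.normalizer_eq_top_iff.mp hnormtop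
  set A := pPrimeCore p G with hAdef
  haveI hAn : A.Normal := by rw [hAdef]; infer_instance
  have hHA : Hh ≤ A := by
    rw [hAdef]
    exact le_sSup ⟨hHhn, by rw [hcardH]; exact hmcop⟩
  have hAK : A ≤ K := by
    have h1 : A.map π ≤ B := by rw [hAdef, hBdef]; exact hk_map_pPrimeCore_le π hπs p
    exact Subgroup.map_le_iff_le_comap.mp h1
  have hAT : A ≤ T := le_trans hAK hKT
  set ρ := QuotientGroup.mk' A with hρdef
  have hρs : Function.Surjective ρ := QuotientGroup.mk'_surjective A
  have hkerρ : ρ.ker = A := QuotientGroup.ker_mk' A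
  have hKρ : IsPGroup p (K.map ρ) := by
    have hKeq : K.map ρ = P₀.map ρ := by
      rw [← hKsup, Subgroup.map_sup]
      have h1 : Hh.map ρ = ⊥ := by
        rw [eq_bot_iff]; rintro x ⟨h, hh, rfl⟩
        have h2 : h ∈ ρ.ker := by rw [hkerρ]; exact hHA hh
        simpa [Subgroup.mem_bot] using h2
      rw [h1, sup_bot_eq]
    rw [hKeq]
    exact hP₀p.map ρ
  have hTmapπ : T.map π = C := Subgroup.map_comap_eq_self_of_surjective hπs C
  have hΦT : Φ ≤ T := le_trans hΦK hKT
  have c1 : Nat.card C * Nat.card ↥Φ = Nat.card T := by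
    have h := hk_card_map_mk'_mul Φ T
    rwa [inf_eq_left.mpr hΦT, hTmapπ] at h
  set D := pCore p ((G ⧸ Φ) ⧸ B) with hDdef
  have hCmap : C.map (QuotientGroup.mk' B) = D := by
    rw [hCdef, hDdef]
    exact Subgroup.map_comap_eq_self_of_surjective (QuotientGroup.mk'_surjective B) _
  have c2 : Nat.card D * Nat.card B = Nat.card C := by
    have h := hk_card_map_mk'_mul B C
    rwa [inf_eq_left.mpr hBC, hCmap] at h
  set S := T.map ρ with hSdef
  set W := (K.map ρ).subgroupOf S with hWdef
  have hKTρ : K.map ρ ≤ S := Subgroup.map_mono hKT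
  have hWp : IsPGroup p W := hKρ.comap_of_injective S.subtype Subtype.coe_injective
  have c3 : Nat.card S = Nat.card (↥S ⧸ W) * Nat.card W :=
    Subgroup.card_eq_card_quotient_mul_card_subgroup W
  have c4 : Nat.card W = Nat.card (K.map ρ) := by
    rw [hWdef]
    exact Nat.card_congr (Subgroup.subgroupOfEquivOfLe hKTρ).toEquiv
  have c5 : Nat.card S * Nat.card A = Nat.card T := by
    have h := hk_card_map_mk'_mul A T
    rwa [inf_eq_left.mpr hAT] at h
  have c6 : Nat.card (K.map ρ) * Nat.card A = Nat.card K := by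
    have h := hk_card_map_mk'_mul A K
    rwa [inf_eq_left.mpr hAK] at h
  have hKpos : 0 < Nat.card K := Nat.card_pos
  have c8 : Nat.card (↥S ⧸ W) * Nat.card K = Nat.card T := by
    calc Nat.card (↥S ⧸ W) * Nat.card K
        = Nat.card (↥S ⧸ W) * (Nat.card (K.map ρ) * Nat.card A) := by rw [c6]
      _ = (Nat.card (↥S ⧸ W) * Nat.card W) * Nat.card A := by rw [c4]; ring
      _ = Nat.card S * Nat.card A := by rw [← c3]
      _ = Nat.card T := c5
  have c9 : Nat.card D * Nat.card K = Nat.card T := by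
    calc Nat.card D * Nat.card K
        = Nat.card D * (Nat.card B * Nat.card ↥Φ) := by rw [hcardK]
      _ = (Nat.card D * Nat.card B) * Nat.card ↥Φ := by ring
      _ = Nat.card C * Nat.card ↥Φ := by rw [c2]
      _ = Nat.card T := c1
  have c10 : Nat.card (↥S ⧸ W) = Nat.card D :=
    Nat.eq_of_mul_eq_mul_right hKpos (c8.trans c9.symm)
  have hDp : IsPGroup p D := by rw [hDdef]; exact (hk_pCore p).2
  have hSp : IsPGroup p S := by
    rw [IsPGroup.iff_card]
    obtain ⟨a, ha⟩ := IsPGroup.iff_card.mp hWp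
    obtain ⟨b, hb⟩ := IsPGroup.iff_card.mp hDp
    exact ⟨b + a, by rw [c3, ha, c10, hb, pow_add]⟩
  haveI hSn : S.Normal := Subgroup.Normal.map hTn ρ hρs
  have hSle : S ≤ pCore p (G ⧸ A) := le_sSup ⟨hSn, hSp⟩
  intro x hx
  show ρ x ∈ pCore p (G ⧸ A)
  exact hSle (Subgroup.mem_map_of_mem ρ hx)

end HawkesAux

set_option maxHeartbeats 1000000 in
/-- The Hawkes graph function is `E_Φ`-closed: `q` divides `|G / O_{p',p}(G)|` iff `q` divides
`|(G/Φ(G)) / O_{p',p}(G/Φ(G))|`, where `Φ(G)` is the Frattini subgroup. -/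
theorem hawkes_EPhi_closed {G : Type*} [Group G] [Finite G] {p q : ℕ}
    (hp : p.Prime) (hq : q.Prime) :
    q ∣ Nat.card (G ⧸ OpPrimeP p G) ↔
      q ∣ Nat.card ((G ⧸ frattini G) ⧸ OpPrimeP p (G ⧸ frattini G)) := by
  haveI := Fact.mk hp
  set Φ := frattini G with hΦ
  haveI : Φ.Normal := by rw [hΦ]; infer_instance
  set C := OpPrimeP p (G ⧸ Φ) with hC
  have heq : OpPrimeP p G = C.comap (QuotientGroup.mk' Φ) := by
    apply le_antisymm
    · apply Subgroup.map_le_iff_le_comap.mp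
      exact hk_map_OpPrimeP_le (QuotientGroup.mk' Φ) (QuotientGroup.mk'_surjective Φ) p
    · exact hk_hard
  haveI hCn : C.Normal := by rw [hC]; unfold OpPrimeP; infer_instance
  haveI : (OpPrimeP p G).Normal := by rw [heq]; infer_instance
  have hΦle : Φ ≤ OpPrimeP p G := by
    rw [heq]; intro x hx
    show QuotientGroup.mk' Φ x ∈ C
    have h1 : QuotientGroup.mk' Φ x = 1 := (QuotientGroup.eq_one_iff x).mpr hx
    rw [h1]; exact Subgroup.one_mem _
  have hmapeq : (OpPrimeP p G).map (QuotientGroup.mk' Φ) = C := by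
    rw [heq]
    exact Subgroup.map_comap_eq_self_of_surjective (QuotientGroup.mk'_surjective Φ) C
  have hcards : Nat.card (G ⧸ OpPrimeP p G) = Nat.card ((G ⧸ Φ) ⧸ C) := by
    have e := QuotientGroup.quotientQuotientEquivQuotient Φ (OpPrimeP p G) hΦle
    rw [← hmapeq]
    exact (Nat.card_congr e.toEquiv).symm
  rw [hcards]
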